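/- Per-step interior-point reward update bound (Appendix C): in a finite discounted MDP, let δ > 0, t > 0, let R : S → A → ℝ be a reward signal, and let π, π' be policies with (π s a = 0 → π' s a = 0) such that D̄_KL(π'‖π) ≤ δ and 𝔸_R(π,π') ≥ −1/t (as holds when π' is a 1/t-suboptimal solution of the trust-region subproblem via the interior-point method). Then J_R(π') − J_R(π) ≥ − 1/((1−γ)·t) − √(2δ) · γ · ε_R(π,π') / (1−γ)². -/

import Mathlib

open Real BigOperators

/-- Induced transition matrix of policy `pol`: `P_pol(s,s') = ∑ a, pol s a * P s a s'`. -/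
noncomputable def transMat {S A : Type*} [Fintype A] (P : S → A → S → ℝ)
    (pol : S → A → ℝ) : Matrix S S ℝ :=
  fun s s' => ∑ a, pol s a * P s a s'

/-- Discounted state visitation distribution
`d_pol(s) = (1-γ) ∑ₜ γ^t ∑_{s0} ρ0 s0 * (P_pol^t)(s0,s)`. -/
noncomputable def dVisit {S A : Type*} [Fintype S] [DecidableEq S] [Fintype A]
    (P : S → A → S → ℝ) (γ : ℝ) (ρ0 : S → ℝ) (pol : S → A → ℝ) (s : S) : ℝ :=
  (1 - γ) * ∑' t : ℕ, γ ^ t * ∑ s0, ρ0 s0 * (transMat P pol ^ t) s0 s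

/-- Value function of signal `F` under policy `pol`. -/
noncomputable def Vfun {S A : Type*} [Fintype S] [DecidableEq S] [Fintype A]
    (P : S → A → S → ℝ) (γ : ℝ) (F : S → A → ℝ) (pol : S → A → ℝ) (s : S) : ℝ :=
  ∑' t : ℕ, γ ^ t * ∑ s', (transMat P pol ^ t) s s' * ∑ a, pol s' a * F s' a

/-- Return `J_F(pol) = ∑ s, ρ0 s * V_F^pol(s)`. -/
noncomputable def Jret {S A : Type*} [Fintype S] [DecidableEq S] [Fintype A]
    (P : S → A → S → ℝ) (γ : ℝ) (ρ0 : S → ℝ) (F : S → A → ℝ) (pol : S → A → ℝ) : ℝ :=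
  ∑ s, ρ0 s * Vfun P γ F pol s

/-- Action-value function `Q_F^pol(s,a) = F s a + γ ∑_{s'} P s a s' * V_F^pol(s')`. -/
noncomputable def Qfun {S A : Type*} [Fintype S] [DecidableEq S] [Fintype A]
    (P : S → A → S → ℝ) (γ : ℝ) (F : S → A → ℝ) (pol : S → A → ℝ) (s : S) (a : A) : ℝ :=
  F s a + γ * ∑ s', P s a s' * Vfun P γ F pol s'

/-- Advantage function `A_F^pol(s,a) = Q_F^pol(s,a) - V_F^pol(s)`. -/
noncomputable def Adv {S A : Type*} [Fintype S] [DecidableEq S] [Fintype A]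
    (P : S → A → S → ℝ) (γ : ℝ) (F : S → A → ℝ) (pol : S → A → ℝ) (s : S) (a : A) : ℝ :=
  Qfun P γ F pol s a - Vfun P γ F pol s

/-- Expected surrogate advantage
`𝔸_F(pol,pol') = ∑ s, d_pol(s) ∑ a, pol' s a * A_F^pol(s,a)`. -/
noncomputable def surrAdv {S A : Type*} [Fintype S] [DecidableEq S] [Fintype A]
    (P : S → A → S → ℝ) (γ : ℝ) (ρ0 : S → ℝ) (F : S → A → ℝ)
    (pol pol' : S → A → ℝ) : ℝ :=
  ∑ s, dVisit P γ ρ0 pol s * ∑ a, pol' s a * Adv P γ F pol s a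

/-- `ε_F(pol,pol') = max_s |∑ a, pol' s a * A_F^pol(s,a)|`. -/
noncomputable def epsAdv {S A : Type*} [Fintype S] [DecidableEq S] [Fintype A] [Nonempty S]
    (P : S → A → S → ℝ) (γ : ℝ) (F : S → A → ℝ) (pol pol' : S → A → ℝ) : ℝ :=
  Finset.univ.sup' Finset.univ_nonempty fun s => |∑ a, pol' s a * Adv P γ F pol s a|

/-- Per-state KL divergence `KL(pol'‖pol)(s) = ∑ a, pol' s a * log (pol' s a / pol s a)`
(with the convention `0 * log 0 = 0`, automatic since `Real.log 0 = 0`). -/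
noncomputable def klState {S A : Type*} [Fintype A] (pol' pol : S → A → ℝ) (s : S) : ℝ :=
  ∑ a, pol' s a * Real.log (pol' s a / pol s a)

/-- Averaged KL divergence `D̄_KL(pol'‖pol) = ∑ s, d_pol(s) * KL(pol'‖pol)(s)`. -/
noncomputable def avgKL {S A : Type*} [Fintype S] [DecidableEq S] [Fintype A]
    (P : S → A → S → ℝ) (γ : ℝ) (ρ0 : S → ℝ) (pol' pol : S → A → ℝ) : ℝ :=
  ∑ s, dVisit P γ ρ0 pol s * klState pol' pol s



set_option linter.unusedSectionVars false

section PinskerAux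

/-- derivative helper for h -/
lemma hDeriv {x : ℝ} (hx : 0 < x) :
    HasDerivAt (fun y : ℝ => Real.log y - 3*((y-1)*(y+5))/(2*(y+2)^2))
      ((x-1)^2*(x+8)/(x*(x+2)^3)) x := by
  have h2 : (2*(x+2)^2 : ℝ) ≠ 0 := by positivity
  have hlog : HasDerivAt Real.log x⁻¹ x := Real.hasDerivAt_log (ne_of_gt hx)
  have hu : HasDerivAt (fun y : ℝ => 3*((y-1)*(y+5))) (3*((x+5)+(x-1))) x := by
    have : HasDerivAt (fun y : ℝ => (y-1)*(y+5)) ((x+5)+(x-1)) x := by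
      have h1 : HasDerivAt (fun y : ℝ => y - 1) 1 x := (hasDerivAt_id x).sub_const 1
      have h2 : HasDerivAt (fun y : ℝ => y + 5) 1 x := (hasDerivAt_id x).add_const 5
      simpa using h1.fun_mul h2
    simpa using this.const_mul 3
  have hv : HasDerivAt (fun y : ℝ => 2*(y+2)^2) (2*(2*(x+2))) x := by
    have : HasDerivAt (fun y : ℝ => (y+2)^2) (2*(x+2)) x := by
      have h1 : HasDerivAt (fun y : ℝ => y + 2) 1 x := (hasDerivAt_id x).add_const 2
      simpa using h1.fun_pow 2
    simpa using this.const_mul 2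
  have hdiv := hu.fun_div hv h2
  have := hlog.fun_sub hdiv
  refine this.congr_deriv ?_
  field_simp
  ring

lemma gDeriv {x : ℝ} (hx : 0 < x) :
    HasDerivAt (fun y : ℝ => y * Real.log y - y + 1 - 3*(y-1)^2/(2*(y+2)))
      (Real.log x - 3*((x-1)*(x+5))/(2*(x+2)^2)) x := by
  have h2 : (2*(x+2) : ℝ) ≠ 0 := by positivity
  have hml : HasDerivAt (fun y : ℝ => y * Real.log y) (Real.log x + 1) x :=
    Real.hasDerivAt_mul_log (ne_of_gt hx)
  have hu : HasDerivAt (fun y : ℝ => 3*(y-1)^2) (3*(2*(x-1))) x := by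
    have : HasDerivAt (fun y : ℝ => (y-1)^2) (2*(x-1)) x := by
      have h1 : HasDerivAt (fun y : ℝ => y - 1) 1 x := (hasDerivAt_id x).sub_const 1
      simpa using h1.fun_pow 2
    simpa using this.const_mul 3
  have hv : HasDerivAt (fun y : ℝ => 2*(y+2)) 2 x := by
    have h1 : HasDerivAt (fun y : ℝ => y + 2) 1 x := (hasDerivAt_id x).add_const 2
    simpa using h1.const_mul 2
  have hdiv := hu.fun_div hv h2
  have := ((hml.fun_sub (hasDerivAt_id x)).add_const 1).fun_sub hdiv
  refine this.congr_deriv ?_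
  field_simp
  ring

lemma h_mono : MonotoneOn (fun y : ℝ => Real.log y - 3*((y-1)*(y+5))/(2*(y+2)^2)) (Set.Ioi 0) := by
  have : ∀ x ∈ interior (Set.Ioi (0:ℝ)), 0 ≤ (x-1)^2*(x+8)/(x*(x+2)^3) := by
    intro x hx
    rw [interior_Ioi] at hx
    have hx' : (0:ℝ) < x := hx
    positivity
  refine monotoneOn_of_deriv_nonneg (convex_Ioi 0) ?_ ?_ ?_
  · intro x hx
    exact ((hDeriv hx).continuousAt).continuousWithinAt
  · intro x hx
    rw [interior_Ioi] at hx
    exact (hDeriv hx).differentiableAt.differentiableWithinAt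
  · intro x hx
    rw [interior_Ioi] at hx
    rw [(hDeriv hx).deriv]
    have hx' : (0:ℝ) < x := hx
    positivity

lemma g_nonneg {x : ℝ} (hx : 0 ≤ x) :
    0 ≤ x * Real.log x - x + 1 - 3*(x-1)^2/(2*(x+2)) := by
  set g : ℝ → ℝ := fun y => y * Real.log y - y + 1 - 3*(y-1)^2/(2*(y+2)) with hg
  set h : ℝ → ℝ := fun y => Real.log y - 3*((y-1)*(y+5))/(2*(y+2)^2) with hh
  have h1 : h 1 = 0 := by simp [hh]
  have g1 : g 1 = 0 := by norm_num [hg]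
  have hgc : ContinuousOn g (Set.Icc 0 1) := by
    apply ContinuousOn.sub
    · exact (Real.continuous_mul_log.sub continuous_id).add continuous_const |>.continuousOn
    · apply ContinuousOn.div
      · fun_prop
      · fun_prop
      · intro y hy
        have : (0:ℝ) ≤ y := hy.1
        positivity
  rcases le_or_gt 1 x with hx1 | hx1
  · -- x ≥ 1 : g monotone on Ici 1
    have mono : MonotoneOn g (Set.Ici 1) := by
      refine monotoneOn_of_deriv_nonneg (convex_Ici 1) ?_ ?_ ?_
      · intro y hy
        have hy' : (0:ℝ) < y := lt_of_lt_of_le one_pos hy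
        exact ((gDeriv hy').continuousAt).continuousWithinAt
      · intro y hy
        rw [interior_Ici] at hy
        have hy' : (0:ℝ) < y := lt_trans one_pos hy
        exact (gDeriv hy').differentiableAt.differentiableWithinAt
      · intro y hy
        rw [interior_Ici] at hy
        have hy' : (0:ℝ) < y := lt_trans one_pos hy
        rw [(gDeriv hy').deriv]
        have := h_mono (Set.mem_Ioi.mpr one_pos) (Set.mem_Ioi.mpr hy') (le_of_lt hy)
        simpa using this
    have := mono (Set.mem_Ici.mpr le_rfl) (Set.mem_Ici.mpr hx1) hx1
    rw [g1] at this; exact this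
  · -- 0 ≤ x < 1 : g antitone on Icc 0 1
    have anti : AntitoneOn g (Set.Icc 0 1) := by
      refine antitoneOn_of_deriv_nonpos (convex_Icc 0 1) hgc ?_ ?_
      · intro y hy
        rw [interior_Icc] at hy
        exact (gDeriv hy.1).differentiableAt.differentiableWithinAt
      · intro y hy
        rw [interior_Icc] at hy
        rw [(gDeriv hy.1).deriv]
        have := h_mono (Set.mem_Ioi.mpr hy.1) (Set.mem_Ioi.mpr one_pos) (le_of_lt hy.2)
        simpa using this
    have := anti (Set.mem_Icc.mpr ⟨hx, le_of_lt hx1⟩) (Set.mem_Icc.mpr ⟨zero_le_one, le_rfl⟩) (le_of_lt hx1)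
    rw [g1] at this; exact this

/-- pointwise Pinsker ingredient -/
lemma pointwise_pinsker {p q : ℝ} (hp : 0 ≤ p) (hq : 0 ≤ q) (habs : q = 0 → p = 0) :
    3*(p-q)^2/(2*(p+2*q)) ≤ p * Real.log (p/q) - p + q := by
  rcases eq_or_lt_of_le hq with hq0 | hq0
  · have hp0 : p = 0 := habs hq0.symm
    simp [hp0, ← hq0]
  · have hx : 0 ≤ p / q := div_nonneg hp (le_of_lt hq0)
    have hg := g_nonneg hx
    have hq' : q ≠ 0 := ne_of_gt hq0
    have e1 : q * ((p/q) * Real.log (p/q) - (p/q) + 1) = p * Real.log (p/q) - p + q := by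
      field_simp
    have e2 : q * (3*((p/q)-1)^2/(2*((p/q)+2))) = 3*(p-q)^2/(2*(p+2*q)) := by
      have hpq : p + 2*q ≠ 0 := by positivity
      field_simp
    nlinarith [mul_nonneg (le_of_lt hq0) hg]



lemma finite_pinsker {A : Type*} [Fintype A] (p q : A → ℝ)
    (hp : ∀ a, 0 ≤ p a) (hq : ∀ a, 0 ≤ q a)
    (hp1 : ∑ a, p a = 1) (hq1 : ∑ a, q a = 1)
    (habs : ∀ a, q a = 0 → p a = 0) :
    (∑ a, |p a - q a|) ^ 2 ≤ 2 * ∑ a, p a * Real.log (p a / q a) := by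
  -- Cauchy-Schwarz step
  have cs := Finset.sum_mul_sq_le_sq_mul_sq Finset.univ
      (fun a => Real.sqrt (p a + 2 * q a))
      (fun a => |p a - q a| / Real.sqrt (p a + 2 * q a))
  have e1 : ∀ a : A, Real.sqrt (p a + 2*q a) * (|p a - q a| / Real.sqrt (p a + 2*q a))
      = |p a - q a| := by
    intro a
    have hpa := hp a; have hqa := hq a
    rcases eq_or_lt_of_le (by positivity : (0:ℝ) ≤ p a + 2*q a) with h0 | h0
    · have hpa : p a = 0 := by nlinarith [hp a, hq a]
      have hqa : q a = 0 := by nlinarith [hp a, hq a]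
      simp [hpa, hqa]
    · rw [mul_div_assoc'] at *
      rw [mul_comm, mul_div_assoc, div_self (by positivity : Real.sqrt (p a + 2*q a) ≠ 0), mul_one]
  have e2 : ∀ a : A, Real.sqrt (p a + 2*q a) ^ 2 = p a + 2*q a := by
    intro a; have hpa := hp a; have hqa := hq a; exact Real.sq_sqrt (by positivity)
  have e3 : ∀ a : A, (|p a - q a| / Real.sqrt (p a + 2*q a)) ^ 2 = (p a - q a)^2 / (p a + 2*q a) := by
    intro a; have hpa := hp a; have hqa := hq a
    rw [div_pow, sq_abs, Real.sq_sqrt (by positivity)]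
  have hsum3 : ∑ a, (p a + 2*q a) = 3 := by
    rw [Finset.sum_add_distrib, ← Finset.mul_sum, hp1, hq1]; norm_num
  simp only [e1, e2, e3, hsum3] at cs
  -- pointwise step
  have key : (3:ℝ)/2 * ∑ a, (p a - q a)^2/(p a + 2*q a) ≤ ∑ a, p a * Real.log (p a / q a) := by
    have : ∑ a, (3*(p a - q a)^2/(2*(p a + 2*q a))) ≤ ∑ a, (p a * Real.log (p a / q a) - p a + q a) :=
      Finset.sum_le_sum fun a _ => pointwise_pinsker (hp a) (hq a) (habs a)
    calc (3:ℝ)/2 * ∑ a, (p a - q a)^2/(p a + 2*q a)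
        = ∑ a, (3*(p a - q a)^2/(2*(p a + 2*q a))) := by
          rw [Finset.mul_sum]; congr 1; ext a
          rw [← div_mul_div_comm]
      _ ≤ ∑ a, (p a * Real.log (p a / q a) - p a + q a) := this
      _ = ∑ a, p a * Real.log (p a / q a) := by
          rw [Finset.sum_add_distrib, Finset.sum_sub_distrib, hp1, hq1]; ring
  nlinarith [cs, key]

end PinskerAux



section MDP
variable {S A : Type*} [Fintype S] [DecidableEq S] [Fintype A]

/-- Resolvent entries. -/
noncomputable def resN (P : S → A → S → ℝ) (γ : ℝ) (pol : S → A → ℝ) (s s' : S) : ℝ :=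
  ∑' t : ℕ, γ ^ t * ((transMat P pol) ^ t) s s'

variable {P : S → A → S → ℝ} {γ : ℝ} {pol : S → A → ℝ}

lemma transMat_nonneg (hP0 : ∀ s a s', 0 ≤ P s a s') (hpol0 : ∀ s a, 0 ≤ pol s a)
    (s s' : S) : 0 ≤ transMat P pol s s' :=
  Finset.sum_nonneg fun a _ => mul_nonneg (hpol0 s a) (hP0 s a s')

lemma transMat_rowsum (hP1 : ∀ s a, ∑ s', P s a s' = 1) (hpol1 : ∀ s, ∑ a, pol s a = 1)
    (s : S) : ∑ s', transMat P pol s s' = 1 := by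
  unfold transMat
  rw [Finset.sum_comm]
  calc ∑ a, ∑ s', pol s a * P s a s' = ∑ a, pol s a := by
        apply Finset.sum_congr rfl; intro a _
        rw [← Finset.mul_sum, hP1 s a, mul_one]
    _ = 1 := hpol1 s

lemma pow_nonneg_rowsum (hP0 : ∀ s a s', 0 ≤ P s a s') (hP1 : ∀ s a, ∑ s', P s a s' = 1)
    (hpol0 : ∀ s a, 0 ≤ pol s a) (hpol1 : ∀ s, ∑ a, pol s a = 1) (t : ℕ) :
    (∀ s s', 0 ≤ ((transMat P pol) ^ t) s s') ∧
    (∀ s, ∑ s', ((transMat P pol) ^ t) s s' = 1) := by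
  induction t with
  | zero =>
    constructor
    · intro s s'; simp only [pow_zero, Matrix.one_apply]; split <;> norm_num
    · intro s; simp [Matrix.one_apply]
  | succ t ih =>
    constructor
    · intro s s'
      rw [pow_succ, Matrix.mul_apply]
      exact Finset.sum_nonneg fun u _ =>
        mul_nonneg (ih.1 s u) (transMat_nonneg hP0 hpol0 u s')
    · intro s
      simp only [pow_succ, Matrix.mul_apply]
      rw [Finset.sum_comm]
      calc ∑ u, ∑ s', ((transMat P pol)^t) s u * transMat P pol u s'
          = ∑ u, ((transMat P pol)^t) s u := by
            apply Finset.sum_congr rfl; intro u _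
            rw [← Finset.mul_sum, transMat_rowsum hP1 hpol1, mul_one]
        _ = 1 := ih.2 s

lemma matpow_le_one (hP0 : ∀ s a s', 0 ≤ P s a s') (hP1 : ∀ s a, ∑ s', P s a s' = 1)
    (hpol0 : ∀ s a, 0 ≤ pol s a) (hpol1 : ∀ s, ∑ a, pol s a = 1) (t : ℕ) (s s' : S) :
    ((transMat P pol) ^ t) s s' ≤ 1 := by
  have h := pow_nonneg_rowsum hP0 hP1 hpol0 hpol1 (pol := pol) t
  calc ((transMat P pol)^t) s s' ≤ ∑ u, ((transMat P pol)^t) s u :=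
        Finset.single_le_sum (fun u _ => h.1 s u) (Finset.mem_univ s')
    _ = 1 := h.2 s

lemma summable_aux (hγ0 : 0 < γ) (hγ1 : γ < 1) (f : ℕ → ℝ) (C : ℝ) (hf : ∀ t, |f t| ≤ C) :
    Summable fun t : ℕ => γ ^ t * f t := by
  refine Summable.of_norm_bounded
    ((summable_geometric_of_lt_one hγ0.le hγ1).mul_right C) ?_
  intro t
  rw [Real.norm_eq_abs, abs_mul, abs_pow, abs_of_pos hγ0]
  exact mul_le_mul_of_nonneg_left (hf t) (by positivity)

variable (hP0 : ∀ s a s', 0 ≤ P s a s') (hP1 : ∀ s a, ∑ s', P s a s' = 1)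
    (hγ0 : 0 < γ) (hγ1 : γ < 1)
    (hpol0 : ∀ s a, 0 ≤ pol s a) (hpol1 : ∀ s, ∑ a, pol s a = 1)

include hP0 hP1 hγ0 hγ1 hpol0 hpol1

lemma summable_resN (s s' : S) :
    Summable fun t : ℕ => γ ^ t * ((transMat P pol) ^ t) s s' := by
  apply summable_aux hγ0 hγ1 _ 1
  intro t
  rw [abs_of_nonneg ((pow_nonneg_rowsum hP0 hP1 hpol0 hpol1 t).1 s s')]
  exact matpow_le_one hP0 hP1 hpol0 hpol1 t s s'

omit hγ1 in
lemma resN_nonneg (s s' : S) : 0 ≤ resN P γ pol s s' :=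
  tsum_nonneg fun t => mul_nonneg (by positivity)
    ((pow_nonneg_rowsum hP0 hP1 hpol0 hpol1 t).1 s s')

lemma resN_left (s s' : S) :
    resN P γ pol s s' = (if s = s' then (1:ℝ) else 0)
      + γ * ∑ u, transMat P pol s u * resN P γ pol u s' := by
  unfold resN
  rw [Summable.tsum_eq_zero_add (summable_resN hP0 hP1 hγ0 hγ1 hpol0 hpol1 s s')]
  congr 1
  · simp [Matrix.one_apply]
  · have e : ∀ t : ℕ, γ ^ (t+1) * ((transMat P pol) ^ (t+1)) s s'
        = ∑ u, transMat P pol s u * (γ * (γ ^ t * ((transMat P pol) ^ t) u s')) := by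
      intro t
      rw [pow_succ' (transMat P pol) t, Matrix.mul_apply, Finset.mul_sum]
      apply Finset.sum_congr rfl; intro u _; ring
    simp only [e]
    rw [Summable.tsum_finsetSum (fun u _ => ((summable_resN hP0 hP1 hγ0 hγ1 hpol0 hpol1 u s').mul_left γ).mul_left _)]
    rw [Finset.mul_sum]
    apply Finset.sum_congr rfl; intro u _
    rw [tsum_mul_left, tsum_mul_left]
    ring

lemma resN_right (s s' : S) :
    resN P γ pol s s' = (if s = s' then (1:ℝ) else 0)
      + γ * ∑ u, resN P γ pol s u * transMat P pol u s' := by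
  unfold resN
  rw [Summable.tsum_eq_zero_add (summable_resN hP0 hP1 hγ0 hγ1 hpol0 hpol1 s s')]
  congr 1
  · simp [Matrix.one_apply]
  · have e : ∀ t : ℕ, γ ^ (t+1) * ((transMat P pol) ^ (t+1)) s s'
        = ∑ u, (γ * (γ ^ t * ((transMat P pol) ^ t) s u)) * transMat P pol u s' := by
      intro t
      rw [pow_succ (transMat P pol) t, Matrix.mul_apply, Finset.mul_sum]
      apply Finset.sum_congr rfl; intro u _; ring
    simp only [e]
    rw [Summable.tsum_finsetSum (fun u _ => (((summable_resN hP0 hP1 hγ0 hγ1 hpol0 hpol1 s u).mul_left γ).mul_right _))]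
    rw [Finset.mul_sum]
    apply Finset.sum_congr rfl; intro u _
    rw [tsum_mul_right, tsum_mul_left]
    ring

lemma resN_rowsum (s : S) : ∑ s', resN P γ pol s s' = (1 - γ)⁻¹ := by
  unfold resN
  rw [← Summable.tsum_finsetSum (fun s' _ => summable_resN hP0 hP1 hγ0 hγ1 hpol0 hpol1 s s')]
  have e : ∀ t : ℕ, (∑ s', γ ^ t * ((transMat P pol) ^ t) s s') = γ ^ t := by
    intro t
    rw [← Finset.mul_sum, (pow_nonneg_rowsum hP0 hP1 hpol0 hpol1 t).2 s, mul_one]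
  calc ∑' (t : ℕ), ∑ s', γ ^ t * ((transMat P pol) ^ t) s s'
      = ∑' (t : ℕ), γ ^ t := by exact tsum_congr e
    _ = (1 - γ)⁻¹ := tsum_geometric_of_lt_one hγ0.le hγ1

end MDP

-- ====== bridge to Vfun / dVisit ======



section Bridge
variable {S A : Type*} [Fintype S] [DecidableEq S] [Fintype A]
variable {P : S → A → S → ℝ} {γ : ℝ} {pol : S → A → ℝ}
variable (hP0 : ∀ s a s', 0 ≤ P s a s') (hP1 : ∀ s a, ∑ s', P s a s' = 1)
    (hγ0 : 0 < γ) (hγ1 : γ < 1)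
    (hpol0 : ∀ s a, 0 ≤ pol s a) (hpol1 : ∀ s, ∑ a, pol s a = 1)

include hP0 hP1 hγ0 hγ1 hpol0 hpol1

lemma Vfun_eq (F : S → A → ℝ) (s : S) :
    Vfun P γ F pol s = ∑ s', resN P γ pol s s' * ∑ a, pol s' a * F s' a := by
  unfold Vfun
  have e : ∀ t : ℕ, γ ^ t * ∑ s', ((transMat P pol) ^ t) s s' * ∑ a, pol s' a * F s' a
      = ∑ s', γ ^ t * ((transMat P pol) ^ t) s s' * ∑ a, pol s' a * F s' a := by
    intro t; rw [Finset.mul_sum]; apply Finset.sum_congr rfl; intro u _; ring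
  simp only [e]
  rw [Summable.tsum_finsetSum (fun s' _ => (summable_resN hP0 hP1 hγ0 hγ1 hpol0 hpol1 s s').mul_right _)]
  apply Finset.sum_congr rfl; intro s' _
  rw [tsum_mul_right]; rfl

lemma dVisit_eq (ρ0 : S → ℝ) (s : S) :
    dVisit P γ ρ0 pol s = (1 - γ) * ∑ s0, ρ0 s0 * resN P γ pol s0 s := by
  unfold dVisit
  congr 1
  have e : ∀ t : ℕ, γ ^ t * ∑ s0, ρ0 s0 * ((transMat P pol) ^ t) s0 s
      = ∑ s0, ρ0 s0 * (γ ^ t * ((transMat P pol) ^ t) s0 s) := by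
    intro t; rw [Finset.mul_sum]; apply Finset.sum_congr rfl; intro u _; ring
  simp only [e]
  rw [Summable.tsum_finsetSum (fun s0 _ => (summable_resN hP0 hP1 hγ0 hγ1 hpol0 hpol1 s0 s).mul_left _)]
  apply Finset.sum_congr rfl; intro s0 _
  rw [tsum_mul_left]; rfl

lemma dVisit_nonneg (ρ0 : S → ℝ) (hρ0 : ∀ s, 0 ≤ ρ0 s) (s : S) :
    0 ≤ dVisit P γ ρ0 pol s := by
  rw [dVisit_eq hP0 hP1 hγ0 hγ1 hpol0 hpol1]
  apply mul_nonneg (by linarith)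
  exact Finset.sum_nonneg fun s0 _ =>
    mul_nonneg (hρ0 s0) (resN_nonneg hP0 hP1 hγ0 hpol0 hpol1 s0 s)

lemma dVisit_sum (ρ0 : S → ℝ) (hρ1 : ∑ s, ρ0 s = 1) :
    ∑ s, dVisit P γ ρ0 pol s = 1 := by
  have e : ∀ s : S, dVisit P γ ρ0 pol s = (1 - γ) * ∑ s0, ρ0 s0 * resN P γ pol s0 s :=
    dVisit_eq hP0 hP1 hγ0 hγ1 hpol0 hpol1 ρ0
  simp only [e]
  rw [← Finset.mul_sum, Finset.sum_comm]
  have : ∀ s0 : S, ∑ s, ρ0 s0 * resN P γ pol s0 s = ρ0 s0 * (1 - γ)⁻¹ := by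
    intro s0
    rw [← Finset.mul_sum, resN_rowsum hP0 hP1 hγ0 hγ1 hpol0 hpol1]
  simp only [this]
  rw [← Finset.sum_mul, hρ1]
  have h1γ : (1:ℝ) - γ ≠ 0 := by linarith
  field_simp
end Bridge

-- ====== two-policy section ======
section TwoPol
variable {S A : Type*} [Fintype S] [DecidableEq S] [Fintype A]
variable {P : S → A → S → ℝ} {γ : ℝ} {pol pol' : S → A → ℝ}
variable (hP0 : ∀ s a s', 0 ≤ P s a s') (hP1 : ∀ s a, ∑ s', P s a s' = 1)
    (hγ0 : 0 < γ) (hγ1 : γ < 1)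
    (hpol0 : ∀ s a, 0 ≤ pol s a) (hpol1 : ∀ s, ∑ a, pol s a = 1)
    (hpol'0 : ∀ s a, 0 ≤ pol' s a) (hpol'1 : ∀ s, ∑ a, pol' s a = 1)

include hP0 hP1 hγ0 hγ1 hpol0 hpol1 hpol'0 hpol'1

/-- resolvent difference identity: N' - N = γ N (M' - M) N'. -/
lemma resN_diff (a b : S) :
    resN P γ pol' a b - resN P γ pol a b
      = γ * ∑ u, ∑ v, resN P γ pol a u *
          (transMat P pol' u v - transMat P pol u v) * resN P γ pol' v b := by
  have A1 : γ * ∑ u, ∑ v, resN P γ pol a u * transMat P pol' u v * resN P γ pol' v b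
      = (∑ u, resN P γ pol a u * resN P γ pol' u b) - resN P γ pol a b := by
    calc γ * ∑ u, ∑ v, resN P γ pol a u * transMat P pol' u v * resN P γ pol' v b
        = ∑ u, resN P γ pol a u * (γ * ∑ v, transMat P pol' u v * resN P γ pol' v b) := by
          rw [Finset.mul_sum]
          apply Finset.sum_congr rfl; intro u _
          rw [Finset.mul_sum, Finset.mul_sum, Finset.mul_sum]
          apply Finset.sum_congr rfl; intro v _; ring
      _ = ∑ u, resN P γ pol a u * (resN P γ pol' u b - (if u = b then (1:ℝ) else 0)) := by
          apply Finset.sum_congr rfl; intro u _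
          have := resN_left hP0 hP1 hγ0 hγ1 hpol'0 hpol'1 u b
          have h2 : γ * ∑ v, transMat P pol' u v * resN P γ pol' v b
              = resN P γ pol' u b - (if u = b then (1:ℝ) else 0) := by linarith
          rw [h2]
      _ = (∑ u, resN P γ pol a u * resN P γ pol' u b) - resN P γ pol a b := by
          simp only [mul_sub, Finset.sum_sub_distrib, mul_ite, mul_one, mul_zero]
          rw [Finset.sum_ite_eq' Finset.univ b (fun u => resN P γ pol a u)]
          simp
  have A2 : γ * ∑ u, ∑ v, resN P γ pol a u * transMat P pol u v * resN P γ pol' v b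
      = (∑ v, resN P γ pol a v * resN P γ pol' v b) - resN P γ pol' a b := by
    calc γ * ∑ u, ∑ v, resN P γ pol a u * transMat P pol u v * resN P γ pol' v b
        = ∑ v, (γ * ∑ u, resN P γ pol a u * transMat P pol u v) * resN P γ pol' v b := by
          rw [Finset.sum_comm, Finset.mul_sum]
          apply Finset.sum_congr rfl; intro v _
          rw [Finset.mul_sum, Finset.mul_sum, Finset.sum_mul]
          apply Finset.sum_congr rfl; intro u _; ring
      _ = ∑ v, (resN P γ pol a v - (if a = v then (1:ℝ) else 0)) * resN P γ pol' v b := by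
          apply Finset.sum_congr rfl; intro v _
          have := resN_right hP0 hP1 hγ0 hγ1 hpol0 hpol1 a v
          have h2 : γ * ∑ u, resN P γ pol a u * transMat P pol u v
              = resN P γ pol a v - (if a = v then (1:ℝ) else 0) := by linarith
          rw [h2]
      _ = (∑ v, resN P γ pol a v * resN P γ pol' v b) - resN P γ pol' a b := by
          simp only [sub_mul, Finset.sum_sub_distrib, ite_mul, one_mul, zero_mul]
          rw [Finset.sum_ite_eq Finset.univ a (fun v => resN P γ pol' v b)]
          simp
  have split : ∑ u, ∑ v, resN P γ pol a u *
        (transMat P pol' u v - transMat P pol u v) * resN P γ pol' v b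
      = (∑ u, ∑ v, resN P γ pol a u * transMat P pol' u v * resN P γ pol' v b)
        - ∑ u, ∑ v, resN P γ pol a u * transMat P pol u v * resN P γ pol' v b := by
    rw [← Finset.sum_sub_distrib]
    apply Finset.sum_congr rfl; intro u _
    rw [← Finset.sum_sub_distrib]
    apply Finset.sum_congr rfl; intro v _; ring
  rw [split, mul_sub, A1, A2]
  ring
end TwoPol




section Main
variable {S A : Type*} [Fintype S] [DecidableEq S] [Fintype A]
variable {P : S → A → S → ℝ} {γ : ℝ} {pol pol' : S → A → ℝ}
variable (hP0 : ∀ s a s', 0 ≤ P s a s') (hP1 : ∀ s a, ∑ s', P s a s' = 1)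
    (hγ0 : 0 < γ) (hγ1 : γ < 1)
    (hpol0 : ∀ s a, 0 ≤ pol s a) (hpol1 : ∀ s, ∑ a, pol s a = 1)
    (hpol'0 : ∀ s a, 0 ≤ pol' s a) (hpol'1 : ∀ s, ∑ a, pol' s a = 1)

/-- advantage expectation rewrite (no resolvent needed). -/
lemma adv_exp_eq (R : S → A → ℝ) (hpol'1 : ∀ s, ∑ a, pol' s a = 1) (s : S) :
    ∑ a, pol' s a * Adv P γ R pol s a
      = (∑ a, pol' s a * R s a)
        + γ * (∑ s', transMat P pol' s s' * Vfun P γ R pol s')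
        - Vfun P γ R pol s := by
  unfold Adv Qfun
  have e : ∀ a : A, pol' s a * (R s a + γ * ∑ s', P s a s' * Vfun P γ R pol s' - Vfun P γ R pol s)
      = pol' s a * R s a + (∑ s', γ * (pol' s a * (P s a s' * Vfun P γ R pol s')))
        - pol' s a * Vfun P γ R pol s := by
    intro a
    have h1 : pol' s a * (γ * ∑ s', P s a s' * Vfun P γ R pol s')
        = ∑ s', γ * (pol' s a * (P s a s' * Vfun P γ R pol s')) := by
      rw [Finset.mul_sum, Finset.mul_sum]
      apply Finset.sum_congr rfl; intro s' _; ring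
    rw [mul_sub, mul_add, h1]
  simp only [e, Finset.sum_sub_distrib, Finset.sum_add_distrib, ← Finset.sum_mul, hpol'1 s, one_mul]
  congr 2
  rw [Finset.sum_comm, Finset.mul_sum]
  apply Finset.sum_congr rfl; intro s' _
  unfold transMat
  rw [Finset.sum_mul, Finset.mul_sum]
  apply Finset.sum_congr rfl; intro a _; ring

include hP0 hP1 hγ0 hγ1 hpol0 hpol1 hpol'0 hpol'1 in
/-- performance difference. -/
lemma perf_diff (R : S → A → ℝ) (ρ0 : S → ℝ) :
    ∑ s, dVisit P γ ρ0 pol' s * (∑ a, pol' s a * Adv P γ R pol s a)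
      = (1 - γ) * (Jret P γ ρ0 R pol' - Jret P γ ρ0 R pol) := by
  set N' := resN P γ pol' with hN'
  set V := Vfun P γ R pol with hV
  set w : S → ℝ := fun s => ∑ s0, ρ0 s0 * N' s0 s with hw
  have hd : ∀ s, dVisit P γ ρ0 pol' s = (1 - γ) * w s :=
    fun s => dVisit_eq hP0 hP1 hγ0 hγ1 hpol'0 hpol'1 ρ0 s
  -- key resolvent recursion transposed: γ * ∑ s, w s * M' s u = w u - ρ0 u
  have hrec : ∀ u : S, γ * ∑ s, w s * transMat P pol' s u = w u - ρ0 u := by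
    intro u
    have e : ∀ s0 : S, ρ0 s0 * N' s0 u
        = ρ0 s0 * (if s0 = u then (1:ℝ) else 0)
          + γ * ∑ s, (ρ0 s0 * N' s0 s) * transMat P pol' s u := by
      intro s0
      rw [hN', resN_right hP0 hP1 hγ0 hγ1 hpol'0 hpol'1 s0 u, mul_add, Finset.mul_sum,
        Finset.mul_sum]
      congr 1
      rw [Finset.mul_sum]
      apply Finset.sum_congr rfl; intro s _; ring
    have : w u = ρ0 u + γ * ∑ s, w s * transMat P pol' s u := by
      rw [hw]
      simp only [e]
      rw [Finset.sum_add_distrib]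
      congr 1
      · simp only [mul_ite, mul_one, mul_zero]
        rw [Finset.sum_ite_eq' Finset.univ u ρ0]
        simp
      · rw [← Finset.mul_sum, Finset.sum_comm]
        congr 1
        apply Finset.sum_congr rfl; intro s _
        rw [Finset.sum_mul]
    linarith
  -- A) ∑ w * r' = Jret pol'
  have hA : ∑ s, w s * (∑ a, pol' s a * R s a) = Jret P γ ρ0 R pol' := by
    unfold Jret
    have : ∀ s0 : S, ρ0 s0 * Vfun P γ R pol' s0
        = ∑ s, (ρ0 s0 * N' s0 s) * (∑ a, pol' s a * R s a) := by
      intro s0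
      rw [Vfun_eq hP0 hP1 hγ0 hγ1 hpol'0 hpol'1 R s0, Finset.mul_sum]
      apply Finset.sum_congr rfl; intro s _; ring
    simp only [this]
    rw [Finset.sum_comm]
    apply Finset.sum_congr rfl; intro s _
    rw [hw, Finset.sum_mul]
  -- B)
  have hB : ∑ s, w s * (γ * (∑ s', transMat P pol' s s' * V s') - V s)
      = - Jret P γ ρ0 R pol := by
    have e1 : ∑ s, w s * (γ * ∑ s', transMat P pol' s s' * V s')
        = ∑ u, (w u - ρ0 u) * V u := by
      calc ∑ s, w s * (γ * ∑ s', transMat P pol' s s' * V s')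
          = ∑ s, ∑ u, γ * (w s * (transMat P pol' s u * V u)) := by
            apply Finset.sum_congr rfl; intro s _
            rw [Finset.mul_sum, Finset.mul_sum]
            apply Finset.sum_congr rfl; intro u _; ring
        _ = ∑ u, ∑ s, γ * (w s * (transMat P pol' s u * V u)) := Finset.sum_comm
        _ = ∑ u, (γ * ∑ s, w s * transMat P pol' s u) * V u := by
            apply Finset.sum_congr rfl; intro u _
            rw [Finset.mul_sum, Finset.sum_mul]
            apply Finset.sum_congr rfl; intro s _; ring
        _ = ∑ u, (w u - ρ0 u) * V u := by
            apply Finset.sum_congr rfl; intro u _; rw [hrec u]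
    have e0 : ∀ s, w s * (γ * (∑ s', transMat P pol' s s' * V s') - V s)
        = w s * (γ * ∑ s', transMat P pol' s s' * V s') - w s * V s := fun s => by ring
    simp only [e0, Finset.sum_sub_distrib, e1]
    unfold Jret
    rw [hV]
    simp only [sub_mul, Finset.sum_sub_distrib]
    ring
  have hg : ∀ s, ∑ a, pol' s a * Adv P γ R pol s a
      = (∑ a, pol' s a * R s a) + (γ * (∑ s', transMat P pol' s s' * V s') - V s) := by
    intro s
    rw [adv_exp_eq R hpol'1 s]
    ring
  calc ∑ s, dVisit P γ ρ0 pol' s * (∑ a, pol' s a * Adv P γ R pol s a)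
      = (1 - γ) * ∑ s, w s * ((∑ a, pol' s a * R s a)
          + (γ * (∑ s', transMat P pol' s s' * V s') - V s)) := by
        rw [Finset.mul_sum]
        apply Finset.sum_congr rfl; intro s _
        rw [hd s, hg s]; ring
    _ = (1 - γ) * (Jret P γ ρ0 R pol' - Jret P γ ρ0 R pol) := by
        congr 1
        simp only [mul_add, Finset.sum_add_distrib, hA, hB]
        ring

include hP0 hP1 hγ0 hγ1 hpol0 hpol1 hpol'0 hpol'1 in
lemma dvisit_diff (ρ0 : S → ℝ) (s : S) :
    dVisit P γ ρ0 pol' s - dVisit P γ ρ0 pol s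
      = γ * ∑ u, ∑ v, dVisit P γ ρ0 pol u *
          (transMat P pol' u v - transMat P pol u v) * resN P γ pol' v s := by
  rw [dVisit_eq hP0 hP1 hγ0 hγ1 hpol'0 hpol'1, dVisit_eq hP0 hP1 hγ0 hγ1 hpol0 hpol1,
    ← mul_sub, ← Finset.sum_sub_distrib]
  have e : ∀ s0 : S, ρ0 s0 * resN P γ pol' s0 s - ρ0 s0 * resN P γ pol s0 s
      = ∑ u, ∑ v, γ * (ρ0 s0 * resN P γ pol s0 u *
          (transMat P pol' u v - transMat P pol u v) * resN P γ pol' v s) := by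
    intro s0
    rw [← mul_sub, resN_diff hP0 hP1 hγ0 hγ1 hpol0 hpol1 hpol'0 hpol'1 s0 s]
    rw [Finset.mul_sum, Finset.mul_sum]
    apply Finset.sum_congr rfl; intro u _
    rw [Finset.mul_sum, Finset.mul_sum]
    apply Finset.sum_congr rfl; intro v _; ring
  simp only [e]
  have hdu : ∀ u, dVisit P γ ρ0 pol u = (1 - γ) * ∑ s0, ρ0 s0 * resN P γ pol s0 u :=
    dVisit_eq hP0 hP1 hγ0 hγ1 hpol0 hpol1 ρ0
  simp only [hdu, Finset.sum_mul, Finset.mul_sum]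
  rw [Finset.sum_comm]
  apply Finset.sum_congr rfl; intro u _
  rw [Finset.sum_comm]
  apply Finset.sum_congr rfl; intro v _
  apply Finset.sum_congr rfl; intro s0 _
  ring

include hP0 hP1 hγ0 hγ1 hpol0 hpol1 hpol'0 hpol'1 in
lemma dvisit_l1 (ρ0 : S → ℝ) (hρ0 : ∀ s, 0 ≤ ρ0 s) :
    ∑ s, |dVisit P γ ρ0 pol' s - dVisit P γ ρ0 pol s|
      ≤ γ * (1 - γ)⁻¹ * ∑ u, dVisit P γ ρ0 pol u * (∑ a, |pol' u a - pol u a|) := by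
  set d := dVisit P γ ρ0 pol with hd
  have hdnn : ∀ u, 0 ≤ d u := dVisit_nonneg hP0 hP1 hγ0 hγ1 hpol0 hpol1 ρ0 hρ0
  have hN'nn : ∀ v s, 0 ≤ resN P γ pol' v s :=
    resN_nonneg hP0 hP1 hγ0 hpol'0 hpol'1
  have step1 : ∀ s, |dVisit P γ ρ0 pol' s - d s|
      ≤ γ * ∑ u, ∑ v, d u * |transMat P pol' u v - transMat P pol u v| * resN P γ pol' v s := by
    intro s
    rw [dvisit_diff hP0 hP1 hγ0 hγ1 hpol0 hpol1 hpol'0 hpol'1 ρ0 s, abs_mul,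
      abs_of_pos hγ0]
    apply mul_le_mul_of_nonneg_left _ hγ0.le
    calc |∑ u, ∑ v, d u * (transMat P pol' u v - transMat P pol u v) * resN P γ pol' v s|
        ≤ ∑ u, |∑ v, d u * (transMat P pol' u v - transMat P pol u v) * resN P γ pol' v s| :=
          Finset.abs_sum_le_sum_abs _ _
      _ ≤ ∑ u, ∑ v, |d u * (transMat P pol' u v - transMat P pol u v) * resN P γ pol' v s| :=
          Finset.sum_le_sum fun u _ => Finset.abs_sum_le_sum_abs _ _
      _ = ∑ u, ∑ v, d u * |transMat P pol' u v - transMat P pol u v| * resN P γ pol' v s := by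
          apply Finset.sum_congr rfl; intro u _
          apply Finset.sum_congr rfl; intro v _
          rw [abs_mul, abs_mul, abs_of_nonneg (hdnn u), abs_of_nonneg (hN'nn v s)]
  calc ∑ s, |dVisit P γ ρ0 pol' s - d s|
      ≤ ∑ s, γ * ∑ u, ∑ v, d u * |transMat P pol' u v - transMat P pol u v| * resN P γ pol' v s :=
        Finset.sum_le_sum fun s _ => step1 s
    _ = γ * ∑ u, ∑ v, d u * |transMat P pol' u v - transMat P pol u v| * (1 - γ)⁻¹ := by
        rw [← Finset.mul_sum]
        congr 1
        rw [Finset.sum_comm]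
        apply Finset.sum_congr rfl; intro u _
        rw [Finset.sum_comm]
        apply Finset.sum_congr rfl; intro v _
        rw [← Finset.mul_sum, resN_rowsum hP0 hP1 hγ0 hγ1 hpol'0 hpol'1]
    _ ≤ γ * ∑ u, ∑ v, d u * (∑ a, |pol' u a - pol u a| * P u a v) * (1 - γ)⁻¹ := by
        apply mul_le_mul_of_nonneg_left _ hγ0.le
        apply Finset.sum_le_sum; intro u _
        apply Finset.sum_le_sum; intro v _
        apply mul_le_mul_of_nonneg_right _ (inv_nonneg.mpr (by linarith : (0:ℝ) ≤ 1 - γ))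
        apply mul_le_mul_of_nonneg_left _ (hdnn u)
        unfold transMat
        rw [← Finset.sum_sub_distrib]
        calc |∑ a, (pol' u a * P u a v - pol u a * P u a v)|
            ≤ ∑ a, |pol' u a * P u a v - pol u a * P u a v| := Finset.abs_sum_le_sum_abs _ _
          _ = ∑ a, |pol' u a - pol u a| * P u a v := by
              apply Finset.sum_congr rfl; intro a _
              rw [← sub_mul, abs_mul, abs_of_nonneg (hP0 u a v)]
    _ = γ * (1 - γ)⁻¹ * ∑ u, d u * (∑ a, |pol' u a - pol u a|) := by
        rw [mul_assoc]
        congr 1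
        rw [Finset.mul_sum]
        apply Finset.sum_congr rfl; intro u _
        have : ∀ a : A, ∑ v, |pol' u a - pol u a| * P u a v = |pol' u a - pol u a| := by
          intro a; rw [← Finset.mul_sum, hP1 u a, mul_one]
        calc ∑ v, d u * (∑ a, |pol' u a - pol u a| * P u a v) * (1 - γ)⁻¹
            = (1 - γ)⁻¹ * ∑ v, ∑ a, d u * (|pol' u a - pol u a| * P u a v) := by
              rw [Finset.mul_sum]
              apply Finset.sum_congr rfl; intro v _
              rw [Finset.mul_sum, Finset.mul_sum, Finset.sum_mul]
              apply Finset.sum_congr rfl; intro a _; ring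
          _ = (1 - γ)⁻¹ * (d u * ∑ a, |pol' u a - pol u a|) := by
              congr 1
              rw [Finset.sum_comm, Finset.mul_sum]
              apply Finset.sum_congr rfl; intro a _
              rw [← Finset.mul_sum, this a]
          _ = (1 - γ)⁻¹ * (d u * ∑ a, |pol' u a - pol u a|) := by ring
end Main

/-- per-step interior-point reward update bound (Appendix C). -/
theorem interior_point_reward_step_bound {S A : Type*} [Fintype S] [DecidableEq S] [Fintype A] [Nonempty S] [Nonempty A]
    (P : S → A → S → ℝ) (hP0 : ∀ s a s', 0 ≤ P s a s') (hP1 : ∀ s a, ∑ s', P s a s' = 1)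
    (γ : ℝ) (hγ0 : 0 < γ) (hγ1 : γ < 1)
    (ρ0 : S → ℝ) (hρ0 : ∀ s, 0 ≤ ρ0 s) (hρ1 : ∑ s, ρ0 s = 1)
    (δ : ℝ) (hδ : 0 < δ) (t : ℝ) (ht : 0 < t) (R : S → A → ℝ)
    (pol : S → A → ℝ) (hpol0 : ∀ s a, 0 ≤ pol s a) (hpol1 : ∀ s, ∑ a, pol s a = 1) (pol' : S → A → ℝ) (hpol'0 : ∀ s a, 0 ≤ pol' s a) (hpol'1 : ∀ s, ∑ a, pol' s a = 1)
    (habs : ∀ s a, pol s a = 0 → pol' s a = 0)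
    (hKL : avgKL P γ ρ0 pol' pol ≤ δ)
    (hA : -(1 / t) ≤ surrAdv P γ ρ0 R pol pol') :
    Jret P γ ρ0 R pol' - Jret P γ ρ0 R pol ≥
      - (1 / ((1 - γ) * t)) - Real.sqrt (2 * δ) * γ * epsAdv P γ R pol pol' / (1 - γ) ^ 2 := by
  have h1γ : (0:ℝ) < 1 - γ := by linarith
  set d : S → ℝ := dVisit P γ ρ0 pol with hdd
  set d' : S → ℝ := dVisit P γ ρ0 pol' with hdd'
  set g : S → ℝ := fun s => ∑ a, pol' s a * Adv P γ R pol s a with hgg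
  set ε : ℝ := epsAdv P γ R pol pol' with hεε
  have hdnn : ∀ u, 0 ≤ d u := dVisit_nonneg hP0 hP1 hγ0 hγ1 hpol0 hpol1 ρ0 hρ0
  have hdsum : ∑ u, d u = 1 := dVisit_sum hP0 hP1 hγ0 hγ1 hpol0 hpol1 ρ0 hρ1
  have hgle : ∀ s, |g s| ≤ ε := by
    intro s
    rw [hεε]
    exact Finset.le_sup' (fun s => |∑ a, pol' s a * Adv P γ R pol s a|) (Finset.mem_univ s)
  have hεnn : 0 ≤ ε := by
    obtain ⟨s⟩ := (inferInstance : Nonempty S)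
    exact le_trans (abs_nonneg (g s)) (hgle s)
  -- TV bound from Pinsker + Cauchy-Schwarz
  set TV : S → ℝ := fun u => ∑ a, |pol' u a - pol u a| with hTVdef
  have hTVnn : ∀ u, 0 ≤ TV u := fun u => Finset.sum_nonneg fun a _ => abs_nonneg _
  have hpinsker : ∀ u, (TV u) ^ 2 ≤ 2 * klState pol' pol u := by
    intro u
    exact finite_pinsker (fun a => pol' u a) (fun a => pol u a)
      (hpol'0 u) (hpol0 u) (hpol'1 u) (hpol1 u) (fun a => habs u a)
  have hTVbound : ∑ u, d u * TV u ≤ Real.sqrt (2 * δ) := by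
    have cs := Finset.sum_mul_sq_le_sq_mul_sq Finset.univ
      (fun u => Real.sqrt (d u)) (fun u => Real.sqrt (d u) * TV u)
    have e1 : ∀ u : S, Real.sqrt (d u) * (Real.sqrt (d u) * TV u) = d u * TV u := by
      intro u; rw [← mul_assoc, Real.mul_self_sqrt (hdnn u)]
    have e2 : ∀ u : S, Real.sqrt (d u) ^ 2 = d u := fun u => Real.sq_sqrt (hdnn u)
    have e3 : ∀ u : S, (Real.sqrt (d u) * TV u) ^ 2 = d u * TV u ^ 2 := by
      intro u; rw [mul_pow, Real.sq_sqrt (hdnn u)]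
    simp only [e1, e2, e3, hdsum, one_mul] at cs
    have h2 : ∑ u, d u * TV u ^ 2 ≤ 2 * δ := by
      calc ∑ u, d u * TV u ^ 2 ≤ ∑ u, d u * (2 * klState pol' pol u) :=
            Finset.sum_le_sum fun u _ => mul_le_mul_of_nonneg_left (hpinsker u) (hdnn u)
        _ = 2 * avgKL P γ ρ0 pol' pol := by
            unfold avgKL; rw [Finset.mul_sum]
            apply Finset.sum_congr rfl; intro u _; ring
        _ ≤ 2 * δ := by linarith
    have hnn : 0 ≤ ∑ u, d u * TV u :=
      Finset.sum_nonneg fun u _ => mul_nonneg (hdnn u) (hTVnn u)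
    calc ∑ u, d u * TV u = Real.sqrt ((∑ u, d u * TV u) ^ 2) := (Real.sqrt_sq hnn).symm
      _ ≤ Real.sqrt (2 * δ) := Real.sqrt_le_sqrt (le_trans cs h2)
  -- L1 deviation bound
  have hL1 : ∑ s, |d' s - d s| ≤ γ * (1 - γ)⁻¹ * Real.sqrt (2 * δ) := by
    calc ∑ s, |d' s - d s| ≤ γ * (1 - γ)⁻¹ * ∑ u, d u * TV u :=
          dvisit_l1 hP0 hP1 hγ0 hγ1 hpol0 hpol1 hpol'0 hpol'1 ρ0 hρ0
      _ ≤ γ * (1 - γ)⁻¹ * Real.sqrt (2 * δ) := by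
          apply mul_le_mul_of_nonneg_left hTVbound
          positivity
  -- performance difference decomposition
  have hPD : ∑ s, d' s * g s = (1 - γ) * (Jret P γ ρ0 R pol' - Jret P γ ρ0 R pol) :=
    perf_diff hP0 hP1 hγ0 hγ1 hpol0 hpol1 hpol'0 hpol'1 R ρ0
  have hsplit : ∑ s, d' s * g s = surrAdv P γ ρ0 R pol pol' + ∑ s, (d' s - d s) * g s := by
    unfold surrAdv
    rw [← Finset.sum_add_distrib]
    apply Finset.sum_congr rfl; intro s _; ring
  have hdev : -(γ * (1 - γ)⁻¹ * Real.sqrt (2 * δ) * ε) ≤ ∑ s, (d' s - d s) * g s := by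
    have h1 : ∀ s, -( |d' s - d s| * ε) ≤ (d' s - d s) * g s := by
      intro s
      have := abs_mul (d' s - d s) (g s) ▸ neg_abs_le ((d' s - d s) * g s)
      have h2 : |d' s - d s| * |g s| ≤ |d' s - d s| * ε :=
        mul_le_mul_of_nonneg_left (hgle s) (abs_nonneg _)
      have h3 : -( |d' s - d s| * ε) ≤ -( |d' s - d s| * |g s|) := by linarith
      calc -( |d' s - d s| * ε) ≤ -( |d' s - d s| * |g s|) := h3
        _ = -|(d' s - d s) * g s| := by rw [abs_mul]
        _ ≤ (d' s - d s) * g s := neg_abs_le _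
    calc -(γ * (1 - γ)⁻¹ * Real.sqrt (2 * δ) * ε)
        ≤ -((∑ s, |d' s - d s|) * ε) := by
          apply neg_le_neg
          exact mul_le_mul_of_nonneg_right hL1 hεnn
      _ = ∑ s, -( |d' s - d s| * ε) := by
          rw [Finset.sum_mul, ← Finset.sum_neg_distrib]
      _ ≤ ∑ s, (d' s - d s) * g s := Finset.sum_le_sum fun s _ => h1 s
  have hX : -(1/t) - γ * (1 - γ)⁻¹ * Real.sqrt (2 * δ) * ε
      ≤ (1 - γ) * (Jret P γ ρ0 R pol' - Jret P γ ρ0 R pol) := by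
    rw [← hPD, hsplit]
    have := hA
    linarith
  rw [ge_iff_le]
  have hdiv := (div_le_div_iff_of_pos_right h1γ).mpr hX
  have e1 : (1 - γ) * (Jret P γ ρ0 R pol' - Jret P γ ρ0 R pol) / (1 - γ)
      = Jret P γ ρ0 R pol' - Jret P γ ρ0 R pol := by
    field_simp
  have e2 : (-(1/t) - γ * (1 - γ)⁻¹ * Real.sqrt (2 * δ) * ε) / (1 - γ)
      = - (1 / ((1 - γ) * t)) - Real.sqrt (2 * δ) * γ * ε / (1 - γ) ^ 2 := by
    field_simp
  rw [e1, e2] at hdiv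
  exact hdiv
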